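/- Let V and W be finite-dimensional real normed vector spaces, let C ⊆ V × W be a convex cone (convex and stable under multiplication by positive reals) whose linear span is all of V × W, and let F ⊆ V be a linear subspace such that the linear span of C ∩ (F × W) equals F × W. Then there exists a convex subset Ω ⊆ W with 0 ∉ Ω and ⟨Ω⟩ = W such that for every ν ∈ Ω, writing H_ν := {(v, tν) : v ∈ V, t ∈ ℝ}, one has dim(C ∩ H_ν) + dim F = dim(C ∩ (F × W) ∩ H_ν) + dim V. -/

import Mathlib

open Pointwise



section Aux

variable {E : Type*} [AddCommGroup E] [Module ℝ E]

lemma aux_add_mem {K : Set E} (hconv : Convex ℝ K) (hcone : ∀ t : ℝ, 0 < t → t • K ⊆ K)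
    {a b : E} (ha : a ∈ K) (hb : b ∈ K) : a + b ∈ K := by
  have h : (1/2 : ℝ) • a + (1/2 : ℝ) • b ∈ K :=
    hconv ha hb (by norm_num) (by norm_num) (by norm_num)
  have h2 := hcone 2 (by norm_num) (Set.smul_mem_smul_set h)
  have : (2:ℝ) • ((1/2 : ℝ) • a + (1/2 : ℝ) • b) = a + b := by module
  rwa [this] at h2

lemma aux_span_diff {K : Set E} (hadd : ∀ a ∈ K, ∀ b ∈ K, a + b ∈ K)
    (hcone : ∀ t : ℝ, 0 < t → t • K ⊆ K) (hne : K.Nonempty)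
    {y : E} (hy : y ∈ Submodule.span ℝ K) : ∃ a ∈ K, ∃ b ∈ K, a - b = y := by
  obtain ⟨a0, ha0⟩ := hne
  let P : Submodule ℝ E :=
    { carrier := {y | ∃ a ∈ K, ∃ b ∈ K, a - b = y}
      add_mem' := by
        rintro x y ⟨a, ha, b, hb, rfl⟩ ⟨c, hc, d, hd, rfl⟩
        exact ⟨a + c, hadd _ ha _ hc, b + d, hadd _ hb _ hd, by abel⟩
      zero_mem' := ⟨a0, ha0, a0, ha0, sub_self _⟩
      smul_mem' := by
        rintro r x ⟨a, ha, b, hb, rfl⟩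
        rcases lt_trichotomy r 0 with h | h | h
        · refine ⟨(-r) • b, hcone _ (by linarith) (Set.smul_mem_smul_set hb),
            (-r) • a, hcone _ (by linarith) (Set.smul_mem_smul_set ha), by module⟩
        · exact ⟨a0, ha0, a0, ha0, by simp [h]⟩
        · exact ⟨r • a, hcone _ h (Set.smul_mem_smul_set ha),
            r • b, hcone _ h (Set.smul_mem_smul_set hb), by module⟩ }
  have hKP : K ⊆ (P : Set E) := fun a ha => ⟨a + a, hadd _ ha _ ha, a, ha, by abel⟩
  exact Submodule.span_le.mpr hKP hy

end Aux

lemma aux_prod_inf_prod {V W : Type*} [AddCommGroup V] [Module ℝ V] [AddCommGroup W] [Module ℝ W]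
    (p p' : Submodule ℝ V) (q q' : Submodule ℝ W) :
    p.prod q ⊓ p'.prod q' = (p ⊓ p').prod (q ⊓ q') := by
  ext ⟨x, y⟩
  simp only [Submodule.mem_inf, Submodule.mem_prod]
  tauto

lemma aux_finrank_prod {V W : Type*} [AddCommGroup V] [Module ℝ V] [AddCommGroup W] [Module ℝ W]
    [FiniteDimensional ℝ V] [FiniteDimensional ℝ W]
    (p : Submodule ℝ V) (q : Submodule ℝ W) :
    Module.finrank ℝ (p.prod q) = Module.finrank ℝ p + Module.finrank ℝ q := by
  have e : (p.prod q) ≃ₗ[ℝ] p × q :=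
    { toFun := fun x => (⟨(x : V × W).1, x.2.1⟩, ⟨(x : V × W).2, x.2.2⟩)
      invFun := fun y => ⟨(y.1, y.2), ⟨y.1.2, y.2.2⟩⟩
      left_inv := fun x => rfl
      right_inv := fun y => rfl
      map_add' := fun x y => rfl
      map_smul' := fun r x => rfl }
  rw [e.finrank_eq, Module.finrank_prod]

lemma aux_key {V W : Type*} [NormedAddCommGroup V] [NormedSpace ℝ V]
    [NormedAddCommGroup W] [NormedSpace ℝ W]
    {K : Set (V × W)} (hconv : Convex ℝ K) (hcone : ∀ t : ℝ, 0 < t → t • K ⊆ K)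
    {ν : W} (hν : ν ∈ interior (Prod.snd '' K)) :
    Submodule.span ℝ (K ∩ ((⊤ : Submodule ℝ V).prod (ℝ ∙ ν) : Set (V × W)))
      = Submodule.span ℝ K ⊓ (⊤ : Submodule ℝ V).prod (ℝ ∙ ν) := by
  have hadd : ∀ a ∈ K, ∀ b ∈ K, a + b ∈ K := fun a ha b hb => aux_add_mem hconv hcone ha hb
  apply le_antisymm
  · rw [Submodule.span_le]
    rintro x ⟨hxK, hxH⟩
    exact Submodule.mem_inf.mpr ⟨Submodule.subset_span hxK, hxH⟩
  · rintro x hx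
    obtain ⟨hxK, hxH⟩ := Submodule.mem_inf.mp hx
    obtain ⟨-, hx2⟩ := Submodule.mem_prod.mp hxH
    obtain ⟨t, ht⟩ := Submodule.mem_span_singleton.mp hx2
    obtain ⟨a0, ha0K, ha02⟩ := interior_subset hν
    have ha0H : a0 ∈ K ∩ ((⊤ : Submodule ℝ V).prod (ℝ ∙ ν) : Set (V × W)) := by
      refine ⟨ha0K, ?_⟩
      simp only [SetLike.mem_coe, Submodule.mem_prod]
      exact ⟨trivial, by rw [ha02]; exact Submodule.mem_span_singleton_self ν⟩
    set y := x - t • a0 with hy_def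
    have hy : y ∈ Submodule.span ℝ K :=
      sub_mem hxK (Submodule.smul_mem _ _ (Submodule.subset_span ha0K))
    have hy2 : y.2 = 0 := by
      simp only [hy_def, Prod.snd_sub, Prod.smul_snd, ha02, ht, sub_self]
    have hKne : K.Nonempty := ⟨a0, ha0K⟩
    obtain ⟨a, haK, b, hbK, hab⟩ := aux_span_diff hadd hcone hKne hy
    have hba : b.2 = a.2 := by
      have := congrArg Prod.snd hab
      simp only [Prod.snd_sub, hy2] at this
      exact (sub_eq_zero.mp this).symm
    obtain ⟨δ, hδ, hball⟩ := Metric.mem_nhds_iff.mp (mem_interior_iff_mem_nhds.mp hν)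
    set w := a.2 with hw
    set ε : ℝ := δ / (2 * (‖w‖ + 1)) with hε_def
    have hε : 0 < ε := by positivity
    have hmem : ν - ε • w ∈ Metric.ball ν δ := by
      rw [Metric.mem_ball, dist_eq_norm]
      have h1 : ‖ν - ε • w - ν‖ = ε * ‖w‖ := by
        rw [sub_sub_cancel_left, norm_neg, norm_smul, Real.norm_eq_abs, abs_of_pos hε]
      rw [h1, hε_def]
      have hwn : (0:ℝ) ≤ ‖w‖ := norm_nonneg w
      rw [div_mul_eq_mul_div, div_lt_iff₀ (by positivity)]
      nlinarith
    obtain ⟨c, hcK, hc2⟩ := hball hmem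
    have hpK : ε • a + c ∈ K := hadd _ (hcone ε hε (Set.smul_mem_smul_set haK)) _ hcK
    have hqK : ε • b + c ∈ K := hadd _ (hcone ε hε (Set.smul_mem_smul_set hbK)) _ hcK
    have hsnd : ∀ z : V × W, z.2 = w → (ε • z + c).2 = ν := by
      intro z hz
      simp only [Prod.snd_add, Prod.smul_snd, hz, hc2]
      abel
    have hmemH : ∀ z : V × W, z ∈ K → z.2 = w →
        z ∈ K → (ε • z + c) ∈ K ∩ ((⊤ : Submodule ℝ V).prod (ℝ ∙ ν) : Set (V × W)) := by
      intro z hzK hz _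
      refine ⟨hadd _ (hcone ε hε (Set.smul_mem_smul_set hzK)) _ hcK, ?_⟩
      simp only [SetLike.mem_coe, Submodule.mem_prod]
      exact ⟨trivial, by rw [hsnd z hz]; exact Submodule.mem_span_singleton_self ν⟩
    have hp := hmemH a haK rfl haK
    have hq := hmemH b hbK hba hbK
    have hdiff : (ε • a + c) - (ε • b + c) ∈
        Submodule.span ℝ (K ∩ ((⊤ : Submodule ℝ V).prod (ℝ ∙ ν) : Set (V × W))) :=
      sub_mem (Submodule.subset_span hp) (Submodule.subset_span hq)
    have heq : (ε • a + c) - (ε • b + c) = ε • y := by rw [← hab]; module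
    rw [heq] at hdiff
    have hy' : y ∈ Submodule.span ℝ (K ∩ ((⊤ : Submodule ℝ V).prod (ℝ ∙ ν) : Set (V × W))) := by
      have h2 := Submodule.smul_mem _ ε⁻¹ hdiff
      rwa [inv_smul_smul₀ hε.ne'] at h2
    have hx' : x = y + t • a0 := by rw [hy_def]; abel
    rw [hx']
    exact add_mem hy' (Submodule.smul_mem _ _ (Submodule.subset_span ha0H))

/-- If `C ⊆ V × W` is a convex cone spanning `V × W` and `F ⊆ V` is a subspace with
`⟨C ∩ (F × W)⟩ = F × W` (the face `F` is full), then there is a convex set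
`Ω ⊆ W` with `0 ∉ Ω` spanning `W` such that for all `ν ∈ Ω`, with `H_ν := V × ℝν`,
`dim(C ∩ H_ν) + dim F = dim(C ∩ (F × W) ∩ H_ν) + dim V`. -/
theorem stmt_5
    (V W : Type*) [NormedAddCommGroup V] [NormedSpace ℝ V] [FiniteDimensional ℝ V]
    [NormedAddCommGroup W] [NormedSpace ℝ W] [FiniteDimensional ℝ W]
    (C : Set (V × W))
    (hconv : Convex ℝ C)
    (hcone : ∀ t : ℝ, 0 < t → t • C ⊆ C)
    (hspan : Submodule.span ℝ C = ⊤)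
    (F : Submodule ℝ V)
    (hF : Submodule.span ℝ (C ∩ (F.prod ⊤ : Submodule ℝ (V × W))) = F.prod ⊤) :
    ∃ Ω : Set W, Convex ℝ Ω ∧ (0 : W) ∉ Ω ∧ Submodule.span ℝ Ω = ⊤ ∧
      ∀ ν ∈ Ω,
        Module.finrank ℝ
            ↥(Submodule.span ℝ (C ∩ ((⊤ : Submodule ℝ V).prod (ℝ ∙ ν) : Set (V × W))))
          + Module.finrank ℝ ↥F
        = Module.finrank ℝ
            ↥(Submodule.span ℝ (C ∩ (F.prod ⊤ : Submodule ℝ (V × W))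
                ∩ ((⊤ : Submodule ℝ V).prod (ℝ ∙ ν) : Set (V × W))))
          + Module.finrank ℝ V := by
  rcases subsingleton_or_nontrivial W with hW | hW
  · refine ⟨∅, convex_empty, not_false, ?_, fun ν hν => absurd hν not_false⟩
    haveI : Subsingleton (Submodule ℝ W) := (Submodule.subsingleton_iff ℝ).mpr hW
    exact Subsingleton.elim _ _
  -- main case
  set D := C ∩ ((F.prod ⊤ : Submodule ℝ (V × W)) : Set (V × W)) with hD_def
  have hDconv : Convex ℝ D := hconv.inter (F.prod ⊤).convex
  have hDcone : ∀ t : ℝ, 0 < t → t • D ⊆ D := by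
    rintro t ht x ⟨z, ⟨hzC, hzF⟩, rfl⟩
    exact ⟨hcone t ht (Set.smul_mem_smul_set hzC), Submodule.smul_mem _ _ hzF⟩
  have hDspan : Submodule.span ℝ D = F.prod ⊤ := hF
  set s := Prod.snd '' D with hs_def
  have hs_eq : s = (LinearMap.snd ℝ V W) '' D := rfl
  have hs_span : Submodule.span ℝ s = ⊤ := by
    rw [hs_eq, Submodule.span_image, hDspan]
    ext w
    simp only [Submodule.mem_map, Submodule.mem_top, iff_true]
    exact ⟨(0, w), Submodule.mem_prod.mpr ⟨Submodule.zero_mem F, trivial⟩, rfl⟩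
  have hsconv : Convex ℝ s := hDconv.linear_image (LinearMap.snd ℝ V W)
  have hsne : s.Nonempty := by
    rcases s.eq_empty_or_nonempty with h | h
    · rw [h, Submodule.span_empty] at hs_span
      exact absurd hs_span.symm top_ne_bot
    · exact h
  have hsadd : ∀ a ∈ s, ∀ b ∈ s, a + b ∈ s := by
    rintro _ ⟨a, ha, rfl⟩ _ ⟨b, hb, rfl⟩
    exact ⟨a + b, aux_add_mem hDconv hDcone ha hb, rfl⟩
  -- interior of s is nonempty
  have hvspan : vectorSpan ℝ s = ⊤ := by
    refine le_antisymm le_top ?_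
    rw [← hs_span, Submodule.span_le]
    intro u hu
    have h2 : u + u ∈ s := hsadd u hu u hu
    have := vsub_mem_vectorSpan ℝ h2 hu
    simpa using this
  have haff : affineSpan ℝ s = ⊤ :=
    (AffineSubspace.affineSpan_eq_top_iff_vectorSpan_eq_top_of_nonempty (k := ℝ) (V := W) (P := W) hsne).mpr hvspan
  have hint : (interior s).Nonempty := hsconv.interior_nonempty_iff_affineSpan_eq_top.mpr haff
  obtain ⟨ν0, hν0⟩ := hint
  -- find nonzero point of interior s
  obtain ⟨δ0, hδ0, hball0⟩ := Metric.isOpen_iff.mp isOpen_interior ν0 hν0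
  obtain ⟨u, hu⟩ := exists_ne (0 : W)
  have hν1 : ∃ ν1, ν1 ∈ interior s ∧ ν1 ≠ 0 := by
    by_cases h0 : ν0 = 0
    · set u' := (δ0 / (2 * ‖u‖)) • u with hu'
      have hun : ‖u‖ > 0 := norm_pos_iff.mpr hu
      have hu'norm : ‖u'‖ = δ0 / 2 := by
        rw [hu', norm_smul, Real.norm_eq_abs, abs_of_pos (by positivity)]
        field_simp
      refine ⟨ν0 + u', hball0 ?_, ?_⟩
      · rw [Metric.mem_ball, dist_eq_norm, add_sub_cancel_left, hu'norm]
        linarith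
      · rw [h0, zero_add]
        intro h
        rw [h, norm_zero] at hu'norm
        linarith
    · exact ⟨ν0, hν0, h0⟩
  obtain ⟨ν1, hν1int, hν1ne⟩ := hν1
  obtain ⟨δ1, hδ1, hball1⟩ := Metric.isOpen_iff.mp isOpen_interior ν1 hν1int
  set r := min δ1 ‖ν1‖ with hr_def
  have hr : 0 < r := lt_min hδ1 (norm_pos_iff.mpr hν1ne)
  refine ⟨Metric.ball ν1 r, convex_ball ν1 r, ?_, ?_, ?_⟩
  · rw [Metric.mem_ball, dist_zero_left]
    exact not_lt.mpr (min_le_right _ _)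
  · -- span of ball is ⊤
    rw [eq_top_iff]
    intro w _
    rcases eq_or_ne w 0 with rfl | hw
    · exact Submodule.zero_mem _
    have hwn : 0 < ‖w‖ := norm_pos_iff.mpr hw
    set c : ℝ := r / (2 * ‖w‖) with hc_def
    have hc : 0 < c := by positivity
    have h1 : ν1 + c • w ∈ Metric.ball ν1 r := by
      rw [Metric.mem_ball, dist_eq_norm, add_sub_cancel_left, norm_smul,
        Real.norm_eq_abs, abs_of_pos hc, hc_def]
      rw [div_mul_eq_mul_div, div_lt_iff₀ (by positivity)]
      nlinarith
    have h2 : ν1 ∈ Metric.ball ν1 r := Metric.mem_ball_self hr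
    have h3 : c • w ∈ Submodule.span ℝ (Metric.ball ν1 r) := by
      have h4 : (ν1 + c • w) - ν1 ∈ Submodule.span ℝ (Metric.ball ν1 r) :=
        sub_mem (Submodule.subset_span h1) (Submodule.subset_span h2)
      rwa [add_sub_cancel_left] at h4
    have := Submodule.smul_mem (Submodule.span ℝ (Metric.ball ν1 r)) c⁻¹ h3
    rwa [inv_smul_smul₀ hc.ne'] at this
  · intro ν hν
    have hνint : ν ∈ interior s := hball1 (Metric.ball_subset_ball (min_le_left _ _) hν)
    have hνne : ν ≠ 0 := by
      rintro rfl
      rw [Metric.mem_ball, dist_zero_left] at hν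
      exact absurd hν (not_lt.mpr (min_le_right _ _))
    have hνintC : ν ∈ interior (Prod.snd '' C) :=
      interior_mono (Set.image_mono Set.inter_subset_left) hνint
    have key1 := aux_key hconv hcone hνintC
    have key2 := aux_key hDconv hDcone hνint
    rw [hspan, top_inf_eq] at key1
    rw [hDspan, aux_prod_inf_prod, inf_top_eq, top_inf_eq] at key2
    rw [key1, key2, aux_finrank_prod, aux_finrank_prod, finrank_top,
      finrank_span_singleton hνne]
    ring
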